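/- With the same hypotheses, if additionally (a v' + b u')(s) ≠ 0 and κ(s) > 0 at a point s, then ⟨ᾱ(s), T̄⟩ = ⟨α(s), T⟩ if and only if μ(s) = 0 or κ̄_n(s) = κ_n(s). In particular, if the component along every tangent vector is invariant and μ(s) ≠ 0, the normal curvature is invariant. -/

import Mathlib

open scoped RealInnerProductSpace

noncomputable section

abbrev E3 : Type := EuclideanSpace ℝ (Fin 3)

/-- Cross product on `E3`. -/
def cross3 (x y : E3) : E3 :=
  (WithLp.equiv 2 (Fin 3 → ℝ)).symm
    (crossProduct ((WithLp.equiv 2 (Fin 3 → ℝ)) x) ((WithLp.equiv 2 (Fin 3 → ℝ)) y))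

/-- Partial derivative in the first variable. -/
def pdu {α : Type*} [NormedAddCommGroup α] [NormedSpace ℝ α]
    (f : ℝ → ℝ → α) (p q : ℝ) : α := deriv (fun x => f x q) p

/-- Partial derivative in the second variable. -/
def pdv {α : Type*} [NormedAddCommGroup α] [NormedSpace ℝ α]
    (f : ℝ → ℝ → α) (p q : ℝ) : α := deriv (fun y => f p y) q

/-- First fundamental form coefficients. -/
def fE (φ : ℝ → ℝ → E3) (p q : ℝ) : ℝ := ⟪pdu φ p q, pdu φ p q⟫
def fF (φ : ℝ → ℝ → E3) (p q : ℝ) : ℝ := ⟪pdu φ p q, pdv φ p q⟫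
def fG (φ : ℝ → ℝ → E3) (p q : ℝ) : ℝ := ⟪pdv φ p q, pdv φ p q⟫

/-- Unit surface normal. -/
def Nvec (φ : ℝ → ℝ → E3) (p q : ℝ) : E3 :=
  ‖cross3 (pdu φ p q) (pdv φ p q)‖⁻¹ • cross3 (pdu φ p q) (pdv φ p q)

/-- invariance of the tangential component holds iff `μ = 0` or
the normal curvature is invariant; in particular invariance along every tangent
vector with `μ ≠ 0` forces `κ̄_n = κ_n`. -/
theorem stmt10 (φ ψ : ℝ → ℝ → E3) (u v : ℝ → ℝ) (α β : ℝ → E3)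
    (κ mu kn kn' : ℝ → ℝ) (s : ℝ)
    (hform : ∀ a b : ℝ,
      ⟪β s, a • pdu ψ (u s) (v s) + b • pdv ψ (u s) (v s)⟫ -
        ⟪α s, a • pdu φ (u s) (v s) + b • pdv φ (u s) (v s)⟫ =
        (mu s / κ s) * (kn' s - kn s) * (a * deriv v s + b * deriv u s))
    (hκ : 0 < κ s) (a b : ℝ)
    (hab : a * deriv v s + b * deriv u s ≠ 0) :
    (⟪β s, a • pdu ψ (u s) (v s) + b • pdv ψ (u s) (v s)⟫ =
        ⟪α s, a • pdu φ (u s) (v s) + b • pdv φ (u s) (v s)⟫ ↔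
      (mu s = 0 ∨ kn' s = kn s)) ∧
    ((∀ a' b' : ℝ, ⟪β s, a' • pdu ψ (u s) (v s) + b' • pdv ψ (u s) (v s)⟫ =
        ⟪α s, a' • pdu φ (u s) (v s) + b' • pdv φ (u s) (v s)⟫) →
      mu s ≠ 0 → kn' s = kn s) := by
  have h := hform a b
  have hκ' : κ s ≠ 0 := ne_of_gt hκ
  constructor
  · constructor
    · intro he
      rw [he, sub_self] at h
      rcases mul_eq_zero.mp h.symm with h1 | h1
      · rcases mul_eq_zero.mp h1 with h2 | h2
        · left; field_simp at h2; simpa using h2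
        · right; linarith
      · exact absurd h1 hab
    · intro hc
      rcases hc with h1 | h1
      · rw [h1] at h
        simp only [zero_div, zero_mul] at h
        exact sub_eq_zero.mp h
      · rw [h1] at h
        simp only [sub_self, mul_zero, zero_mul] at h
        exact sub_eq_zero.mp h
  · intro hall hmu
    have h' := hform a b
    rw [hall a b, sub_self] at h'
    rcases mul_eq_zero.mp h'.symm with h1 | h1
    · rcases mul_eq_zero.mp h1 with h2 | h2
      · exfalso; apply hmu; field_simp at h2; simpa using h2
      · linarith
    · exact absurd h1 hab
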